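/- Let H be an N×N complex Hermitian matrix with zero diagonal such that every row of H has at most d nonzero entries, where d ≥ 1. Then there exist Hermitian matrices H_1, …, H_{6d}, each with zero diagonal, such that H = H_1 + ⋯ + H_{6d}, the supports of the H_j are pairwise disjoint and each nonzero entry of each H_j equals the corresponding entry of H (i.e., for every pair (i,k), (H_j)_{ik} ∈ {0, H_{ik}} and at most one j has (H_j)_{ik} ≠ 0), and the support graph of each H_j is a star forest (every connected component is a star). -/

import Mathlib

/-- A simple graph is a *star forest* (galaxy) if every connected component is a star:
each component contains a center `c` such that every other vertex of the component is
adjacent to `c` and every edge of the component has `c` as an endpoint. (A single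
vertex and a single edge both count as stars.) -/
def IsStarForest {V : Type*} (G : SimpleGraph V) : Prop :=
  ∀ v : V, ∃ c : V, G.Reachable v c ∧
    (∀ u : V, G.Reachable v u → u ≠ c → G.Adj u c) ∧
    (∀ u w : V, G.Adj u w → G.Reachable v u → u = c ∨ w = c)

/-- The support graph of a square matrix: distinct indices `i` and `k` are adjacent
if and only if the `(i, k)` entry is nonzero. -/
def supportGraph {N : ℕ} (H : Matrix (Fin N) (Fin N) ℂ) : SimpleGraph (Fin N) :=
  SimpleGraph.fromRel (fun i k => H i k ≠ 0)

/-- In a graph where every vertex has at most one neighbour, anything reachable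
from `v` is `v` itself or a neighbour of `v`. -/
lemma reach_of_matching {V : Type*} {G : SimpleGraph V}
    (hm : ∀ v u w : V, G.Adj v u → G.Adj v w → u = w)
    {v x : V} (h : G.Reachable v x) : x = v ∨ G.Adj v x := by
  obtain ⟨w⟩ := h
  induction w with
  | nil => exact Or.inl rfl
  | @cons a b x hab p ih =>
    rcases ih with rfl | hadj
    · exact Or.inr hab
    · exact Or.inl (hm b a x hab.symm hadj).symm

/-- A graph where every vertex has at most one neighbour is a star forest. -/
lemma isStarForest_of_matching {V : Type*} {G : SimpleGraph V}
    (hm : ∀ v u w : V, G.Adj v u → G.Adj v w → u = w) : IsStarForest G := by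
  intro v
  by_cases hex : ∃ u, G.Adj v u
  · obtain ⟨u0, h0⟩ := hex
    refine ⟨u0, h0.reachable, ?_, ?_⟩
    · intro x hr hx
      rcases reach_of_matching hm hr with rfl | ha
      · exact h0
      · exact absurd (hm v x u0 ha h0) hx
    · intro a b hab hra
      rcases reach_of_matching hm hra with rfl | ha
      · exact Or.inr (hm a b u0 hab h0)
      · exact Or.inl (hm v a u0 ha h0)
  · push_neg at hex
    refine ⟨v, SimpleGraph.Reachable.refl v, ?_, ?_⟩
    · intro x hr hx
      rcases reach_of_matching hm hr with rfl | ha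
      · exact absurd rfl hx
      · exact absurd ha (hex x)
    · intro a b hab hra
      rcases reach_of_matching hm hra with rfl | ha
      · exact absurd hab (hex b)
      · exact absurd ha (hex a)

/-- Greedy proper symmetric edge colouring of a symmetric, `d`-sparse edge set
with `6 * d` colours. -/
lemma exists_coloring (N d : ℕ) (hd : 1 ≤ d) :
    ∀ E : Finset (Fin N × Fin N),
      (∀ p ∈ E, (p.2, p.1) ∈ E) →
      (∀ i : Fin N, (E.filter (fun p => p.1 = i)).card ≤ d) →
      ∃ c : Fin N → Fin N → Fin (6 * d),
        (∀ p ∈ E, c p.1 p.2 = c p.2 p.1) ∧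
        (∀ p ∈ E, ∀ q ∈ E, p.1 = q.1 → p.2 ≠ q.2 → c p.1 p.2 ≠ c q.1 q.2) := by
  intro E
  induction E using Finset.strongInduction with
  | _ E ih =>
    intro hsym hsp
    rcases E.eq_empty_or_nonempty with rfl | ⟨⟨i, k⟩, hik⟩
    · exact ⟨fun _ _ => ⟨0, by omega⟩, by simp, by simp⟩
    · set E' : Finset (Fin N × Fin N) := (E.erase (i, k)).erase (k, i) with hE'
      have hsub : E' ⊆ E := (Finset.erase_subset _ _).trans (Finset.erase_subset _ _)
      have hmemE' : ∀ p : Fin N × Fin N, p ∈ E' ↔ p ∈ E ∧ p ≠ (i, k) ∧ p ≠ (k, i) := by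
        intro p
        simp only [hE', Finset.mem_erase]
        tauto
      have hik' : (i, k) ∉ E' := by simp [hmemE']
      have hss : E' ⊂ E := (Finset.ssubset_iff_of_subset hsub).mpr ⟨(i, k), hik, hik'⟩
      have hsym' : ∀ p ∈ E', (p.2, p.1) ∈ E' := by
        intro p hp
        rw [hmemE'] at hp ⊢
        refine ⟨hsym p hp.1, ?_, ?_⟩
        · intro h
          exact hp.2.2 (by
            have : p = ((p.1, p.2) : Fin N × Fin N) := rfl
            rw [Prod.ext_iff] at h ⊢
            exact ⟨h.2, h.1⟩)
        · intro h
          exact hp.2.1 (by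
            rw [Prod.ext_iff] at h ⊢
            exact ⟨h.2, h.1⟩)
      have hsp' : ∀ i : Fin N, (E'.filter (fun p => p.1 = i)).card ≤ d := by
        intro a
        exact le_trans (Finset.card_le_card (Finset.filter_subset_filter _ hsub)) (hsp a)
      obtain ⟨c, hc1, hc2⟩ := ih E' hss hsym' hsp'
      set F : Finset (Fin (6 * d)) :=
        ((E'.filter (fun p => p.1 = i)).image (fun p => c p.1 p.2)) ∪
        ((E'.filter (fun p => p.1 = k)).image (fun p => c p.1 p.2)) with hF
      have hFcard : F.card < 6 * d := by
        have h1 := Finset.card_image_le (s := E'.filter (fun p => p.1 = i))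
          (f := fun p => c p.1 p.2)
        have h2 := Finset.card_image_le (s := E'.filter (fun p => p.1 = k))
          (f := fun p => c p.1 p.2)
        have := Finset.card_union_le
          ((E'.filter (fun p => p.1 = i)).image (fun p => c p.1 p.2))
          ((E'.filter (fun p => p.1 = k)).image (fun p => c p.1 p.2))
        have hi := hsp' i
        have hk := hsp' k
        have : F.card ≤ 2 * d := by
          rw [hF]; omega
        omega
      obtain ⟨j0, hj0⟩ : ∃ j0 : Fin (6 * d), j0 ∉ F := by
        by_contra h
        push_neg at h
        have : (Finset.univ : Finset (Fin (6 * d))) ⊆ F := fun x _ => h x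
        have := Finset.card_le_card this
        simp [Finset.card_univ] at this
        omega
      have hj0i : ∀ p ∈ E', p.1 = i → c p.1 p.2 ≠ j0 := by
        intro p hp hpi h
        exact hj0 (by
          rw [hF, Finset.mem_union]
          exact Or.inl (Finset.mem_image.mpr ⟨p, Finset.mem_filter.mpr ⟨hp, hpi⟩, h⟩))
      have hj0k : ∀ p ∈ E', p.1 = k → c p.1 p.2 ≠ j0 := by
        intro p hp hpk h
        exact hj0 (by
          rw [hF, Finset.mem_union]
          exact Or.inr (Finset.mem_image.mpr ⟨p, Finset.mem_filter.mpr ⟨hp, hpk⟩, h⟩))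
      classical
      refine ⟨fun a b => if (a, b) = (i, k) ∨ (a, b) = (k, i) then j0 else c a b, ?_, ?_⟩
      · intro p hp
        simp only [Prod.mk.eta]
        by_cases h : p = (i, k) ∨ p = (k, i)
        · rcases h with rfl | rfl <;> simp
        · push_neg at h
          have hp' : p ∈ E' := (hmemE' p).mpr ⟨hp, h.1, h.2⟩
          have hps := (hmemE' _).mp (hsym' p hp')
          rw [if_neg (by tauto), if_neg (by tauto)]
          exact hc1 p hp'
      · intro p hp q hq hfst hsnd
        simp only [Prod.mk.eta]
        by_cases h : p = (i, k) ∨ p = (k, i)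
        · have hq1 : q ≠ (i, k) := by
            rintro rfl
            rcases h with rfl | rfl
            · exact hsnd rfl
            · exact hsnd hfst.symm
          have hq2 : q ≠ (k, i) := by
            rintro rfl
            rcases h with rfl | rfl
            · exact hsnd hfst.symm
            · exact hsnd rfl
          have hq' : q ∈ E' := (hmemE' q).mpr ⟨hq, hq1, hq2⟩
          rw [if_pos h, if_neg (by tauto)]
          rcases h with rfl | rfl
          · exact fun hh => hj0i q hq' hfst.symm hh.symm
          · exact fun hh => hj0k q hq' hfst.symm hh.symm
        · push_neg at h
          have hp' : p ∈ E' := (hmemE' p).mpr ⟨hp, h.1, h.2⟩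
          rw [if_neg (by tauto)]
          by_cases h' : q = (i, k) ∨ q = (k, i)
          · rw [if_pos h']
            rcases h' with rfl | rfl
            · exact hj0i p hp' hfst
            · exact hj0k p hp' hfst
          · push_neg at h'
            have hq' : q ∈ E' := (hmemE' q).mpr ⟨hq, h'.1, h'.2⟩
            rw [if_neg (by tauto)]
            exact hc2 p hp' q hq' hfst hsnd

/-- **Star decomposition of a Hamiltonian.** A Hermitian `N × N` matrix
`H` with zero diagonal and at most `d ≥ 1` nonzero entries per row can be written as a
sum of `6 * d` Hermitian matrices with zero diagonal, with pairwise disjoint supports,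
each nonzero entry of each summand agreeing with the corresponding entry of `H`, such
that the support graph of each summand is a star forest. -/
theorem hamiltonian_star_decomposition (N d : ℕ) (hd : 1 ≤ d)
    (H : Matrix (Fin N) (Fin N) ℂ) (hherm : H.IsHermitian)
    (hdiag : ∀ i : Fin N, H i i = 0)
    (hsparse : ∀ i : Fin N, {k : Fin N | H i k ≠ 0}.ncard ≤ d) :
    ∃ Hs : Fin (6 * d) → Matrix (Fin N) (Fin N) ℂ,
      (∀ j, (Hs j).IsHermitian) ∧
      (∀ j, ∀ i : Fin N, Hs j i i = 0) ∧
      (∑ j, Hs j) = H ∧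
      (∀ j, ∀ i k : Fin N, Hs j i k = 0 ∨ Hs j i k = H i k) ∧
      (∀ i k : Fin N, {j : Fin (6 * d) | Hs j i k ≠ 0}.Subsingleton) ∧
      (∀ j, IsStarForest (supportGraph (Hs j))) := by
  classical
  have hsymH : ∀ i k : Fin N, H k i = star (H i k) := fun i k => (hherm.apply k i).symm
  set E : Finset (Fin N × Fin N) :=
    Finset.univ.filter (fun p => H p.1 p.2 ≠ 0) with hEdef
  have hmemE : ∀ p : Fin N × Fin N, p ∈ E ↔ H p.1 p.2 ≠ 0 := by
    intro p; simp [hEdef]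
  have hsym : ∀ p ∈ E, (p.2, p.1) ∈ E := by
    intro p hp
    rw [hmemE] at hp ⊢
    simpa [hsymH p.1 p.2] using hp
  have hsp : ∀ i : Fin N, (E.filter (fun p => p.1 = i)).card ≤ d := by
    intro i
    have himg : E.filter (fun p => p.1 = i)
        = (Finset.univ.filter (fun k => H i k ≠ 0)).image (fun k => ((i, k) : Fin N × Fin N)) := by
      ext ⟨a, b⟩
      simp only [Finset.mem_filter, Finset.mem_image, Finset.mem_univ, true_and, hmemE,
        Prod.mk.injEq]
      constructor
      · rintro ⟨h1, rfl⟩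
        exact ⟨b, by simpa using h1, rfl, rfl⟩
      · rintro ⟨x, hx, rfl, rfl⟩
        exact ⟨by simpa using hx, rfl⟩
    rw [himg, Finset.card_image_of_injective _ (fun a b h => by
      simpa using (Prod.mk.injEq i a i b ▸ h : (i, a) = (i, b)))]
    have := hsparse i
    rwa [Set.ncard_eq_toFinset_card', Set.toFinset_setOf] at this
  obtain ⟨c, hc1, hc2⟩ := exists_coloring N d hd E hsym hsp
  have hcsym : ∀ i k : Fin N, H i k ≠ 0 → c i k = c k i := by
    intro i k h
    exact hc1 (i, k) ((hmemE (i, k)).mpr h)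
  refine ⟨fun j i k => if H i k ≠ 0 ∧ c i k = j then H i k else 0, ?_, ?_, ?_, ?_, ?_, ?_⟩
  · -- Hermitian
    intro j
    apply Matrix.IsHermitian.ext
    intro i k
    show star (if H k i ≠ 0 ∧ c k i = j then H k i else 0)
      = (if H i k ≠ 0 ∧ c i k = j then H i k else 0)
    by_cases h : H i k = 0
    · have hki : H k i = 0 := by rw [hsymH i k, h, star_zero]
      simp [h, hki]
    · have hki : H k i ≠ 0 := by rw [hsymH i k]; exact star_ne_zero.mpr h
      have hcc : c k i = c i k := (hcsym i k h).symm
      rw [hcc]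
      by_cases hj : c i k = j
      · rw [if_pos ⟨hki, hj⟩, if_pos ⟨h, hj⟩, hsymH i k, star_star]
      · rw [if_neg (fun hh => hj hh.2), if_neg (fun hh => hj hh.2), star_zero]
  · -- zero diagonal
    intro j i
    show (if H i i ≠ 0 ∧ c i i = j then H i i else 0) = 0
    simp [hdiag i]
  · -- sum
    ext i k
    erw [Matrix.sum_apply]
    by_cases h : H i k = 0
    · simp [h]
    · simp only [h, ne_eq, not_false_eq_true, true_and]
      rw [Finset.sum_ite_eq Finset.univ (c i k) (fun _ => H i k)]
      simp
  · -- entries agree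
    intro j i k
    dsimp only
    split_ifs with h
    · exact Or.inr rfl
    · exact Or.inl rfl
  · -- disjoint supports
    intro i k j hj j' hj'
    simp only [Set.mem_setOf_eq] at hj hj'
    have h1 : c i k = j := by
      by_contra hc
      exact hj (by simp [hc])
    have h2 : c i k = j' := by
      by_contra hc
      exact hj' (by simp [hc])
    rw [← h1, ← h2]
  · -- star forest
    intro j
    apply isStarForest_of_matching
    have key : ∀ a b : Fin N,
        (if H a b ≠ 0 ∧ c a b = j then H a b else 0) ≠ 0 → H a b ≠ 0 ∧ c a b = j := by
      intro a b h
      by_contra hc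
      exact h (by simp [hc])
    have adj_iff : ∀ a b : Fin N,
        (supportGraph (fun i k => if H i k ≠ 0 ∧ c i k = j then H i k else 0)).Adj a b →
        H a b ≠ 0 ∧ c a b = j := by
      intro a b hab
      erw [supportGraph, SimpleGraph.fromRel_adj] at hab
      rcases hab.2 with h | h
      · exact key a b h
      · obtain ⟨h1, h2⟩ := key b a h
        have h3 : H a b ≠ 0 := by
          rw [hsymH b a]; exact star_ne_zero.mpr h1
        exact ⟨h3, by rw [hcsym a b h3]; exact h2⟩
    intro v u w hu hw
    obtain ⟨hu1, hu2⟩ := adj_iff v u hu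
    obtain ⟨hw1, hw2⟩ := adj_iff v w hw
    by_contra hne
    exact hc2 (v, u) ((hmemE _).mpr hu1) (v, w) ((hmemE _).mpr hw1) rfl hne
      (by rw [hu2, hw2])
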